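/- Let u : ℝ³ → ℝ³ be twice continuously differentiable and let Du(x) denote its 3×3 Jacobian matrix, (Du(x))_{a i} = ∂u^a/∂x^i (x). Define ψ : ℝ³ → ℝ³ by ψ(x) = (1/3)·( adjugate(Du(x)) · u(x) − x ), where adjugate(Du(x)) · u(x) is the matrix-vector product. Then for all x ∈ ℝ³, Σ_{i=1}^3 ∂ψ^i/∂x^i (x) = det(Du(x)) − 1. -/

import Mathlib

noncomputable def prj (i : Fin 3) : (Fin 3 → ℝ) →L[ℝ] ℝ := ContinuousLinearMap.proj i

@[simp] lemma prj_apply (i : Fin 3) (v : Fin 3 → ℝ) : prj i v = v i := rfl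

noncomputable def apv (v : Fin 3 → ℝ) :
    ((Fin 3 → ℝ) →L[ℝ] (Fin 3 → ℝ)) →L[ℝ] (Fin 3 → ℝ) :=
  ContinuousLinearMap.apply ℝ (Fin 3 → ℝ) v

@[simp] lemma apv_apply (v : Fin 3 → ℝ) (T : (Fin 3 → ℝ) →L[ℝ] (Fin 3 → ℝ)) :
    apv v T = T v := rfl

/-- Explicit content of Proposition 5.1: the incompressibility constraint
`det(Du) − 1` is the divergence of `ψ(x) = (1/3)(adj(Du(x))·u(x) − x)`. -/
theorem stmt_12 (u : (Fin 3 → ℝ) → (Fin 3 → ℝ)) (hu : ContDiff ℝ 2 u)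
    (x : Fin 3 → ℝ) :
    ∑ i : Fin 3,
      fderiv ℝ
        (fun y =>
          (((3 : ℝ)⁻¹) •
            ((Matrix.adjugate
                (Matrix.of fun b j => fderiv ℝ u y (Pi.single j 1) b)).mulVec
                (u y) - y)) i)
        x (Pi.single i 1) =
      (Matrix.of fun b j => fderiv ℝ u x (Pi.single j 1) b).det - 1 := by
  have hud : Differentiable ℝ u := hu.differentiable two_ne_zero
  have hu1 : ContDiff ℝ 1 (fderiv ℝ u) := hu.fderiv_right le_rfl
  have hF : HasFDerivAt (fderiv ℝ u) (fderiv ℝ (fderiv ℝ u) x) x :=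
    (hu1.differentiable one_ne_zero x).hasFDerivAt
  have hsymm : ∀ v w : Fin 3 → ℝ, fderiv ℝ (fderiv ℝ u) x v w = fderiv ℝ (fderiv ℝ u) x w v :=
    hu.contDiffAt.isSymmSndFDerivAt (by simp)
  have hg : ∀ b j : Fin 3, HasFDerivAt (fun y => fderiv ℝ u y (Pi.single j 1) b)
      (((prj b).comp (apv (Pi.single j 1))).comp (fderiv ℝ (fderiv ℝ u) x)) x := fun b j => by
    have h := (((prj b).comp (apv (Pi.single j 1))).hasFDerivAt (x := fderiv ℝ u x)).comp x hF
    exact h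
  have hua : ∀ a : Fin 3, HasFDerivAt (fun y => u y a)
      ((prj a).comp (fderiv ℝ u x)) x := fun a => by
    have h := ((prj a).hasFDerivAt (x := u x)).comp x (hud x).hasFDerivAt
    exact h
  have hyi : ∀ i : Fin 3, HasFDerivAt (fun y : Fin 3 → ℝ => y i) (prj i) x := fun i => by
    have h := (prj i).hasFDerivAt (x := x)
    exact h
  have c00 := ((hg 1 1).mul (hg 2 2)).sub ((hg 1 2).mul (hg 2 1))
  have c01 := (((hg 0 1).mul (hg 2 2)).neg).add ((hg 0 2).mul (hg 2 1))
  have c02 := ((hg 0 1).mul (hg 1 2)).sub ((hg 0 2).mul (hg 1 1))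
  have c10 := (((hg 1 0).mul (hg 2 2)).neg).add ((hg 1 2).mul (hg 2 0))
  have c11 := ((hg 0 0).mul (hg 2 2)).sub ((hg 0 2).mul (hg 2 0))
  have c12 := (((hg 0 0).mul (hg 1 2)).neg).add ((hg 0 2).mul (hg 1 0))
  have c20 := ((hg 1 0).mul (hg 2 1)).sub ((hg 1 1).mul (hg 2 0))
  have c21 := (((hg 0 0).mul (hg 2 1)).neg).add ((hg 0 1).mul (hg 2 0))
  have c22 := ((hg 0 0).mul (hg 1 1)).sub ((hg 0 1).mul (hg 1 0))
  have comb0 := ((((c00.mul (hua 0)).add (c01.mul (hua 1))).add (c02.mul (hua 2))).sub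
    (hyi 0)).const_mul (3:ℝ)⁻¹
  have comb1 := ((((c10.mul (hua 0)).add (c11.mul (hua 1))).add (c12.mul (hua 2))).sub
    (hyi 1)).const_mul (3:ℝ)⁻¹
  have comb2 := ((((c20.mul (hua 0)).add (c21.mul (hua 1))).add (c22.mul (hua 2))).sub
    (hyi 2)).const_mul (3:ℝ)⁻¹
  beta_reduce at comb0 comb1 comb2
  have hfun0 : (fun y =>
          (((3 : ℝ)⁻¹) •
            ((Matrix.adjugate
                (Matrix.of fun b j => fderiv ℝ u y (Pi.single j 1) b)).mulVec
                (u y) - y)) (0 : Fin 3))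
      = (fun y =>
        (3:ℝ)⁻¹ *
          ((fderiv ℝ u y (Pi.single 1 1) 1 * fderiv ℝ u y (Pi.single 2 1) 2 -
                    fderiv ℝ u y (Pi.single 2 1) 1 * fderiv ℝ u y (Pi.single 1 1) 2) *
                  u y 0 +
                (-(fderiv ℝ u y (Pi.single 1 1) 0 * fderiv ℝ u y (Pi.single 2 1) 2) +
                    fderiv ℝ u y (Pi.single 2 1) 0 * fderiv ℝ u y (Pi.single 1 1) 2) *
                  u y 1 +
              (fderiv ℝ u y (Pi.single 1 1) 0 * fderiv ℝ u y (Pi.single 2 1) 1 -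
                  fderiv ℝ u y (Pi.single 2 1) 0 * fderiv ℝ u y (Pi.single 1 1) 1) *
                u y 2 -
            y 0)) := by
    funext y
    simp [Matrix.adjugate_fin_three, Matrix.mulVec, dotProduct, Fin.sum_univ_three,
      Pi.smul_apply, Pi.sub_apply, Matrix.vecHead, Matrix.vecTail]
  have hfun1 : (fun y =>
          (((3 : ℝ)⁻¹) •
            ((Matrix.adjugate
                (Matrix.of fun b j => fderiv ℝ u y (Pi.single j 1) b)).mulVec
                (u y) - y)) (1 : Fin 3))
      = (fun y =>
        (3:ℝ)⁻¹ *
          ((-(fderiv ℝ u y (Pi.single 0 1) 1 * fderiv ℝ u y (Pi.single 2 1) 2) +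
                    fderiv ℝ u y (Pi.single 2 1) 1 * fderiv ℝ u y (Pi.single 0 1) 2) *
                  u y 0 +
                (fderiv ℝ u y (Pi.single 0 1) 0 * fderiv ℝ u y (Pi.single 2 1) 2 -
                    fderiv ℝ u y (Pi.single 2 1) 0 * fderiv ℝ u y (Pi.single 0 1) 2) *
                  u y 1 +
              (-(fderiv ℝ u y (Pi.single 0 1) 0 * fderiv ℝ u y (Pi.single 2 1) 1) +
                  fderiv ℝ u y (Pi.single 2 1) 0 * fderiv ℝ u y (Pi.single 0 1) 1) *
                u y 2 -
            y 1)) := by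
    funext y
    simp [Matrix.adjugate_fin_three, Matrix.mulVec, dotProduct, Fin.sum_univ_three,
      Pi.smul_apply, Pi.sub_apply, Matrix.vecHead, Matrix.vecTail]
  have hfun2 : (fun y =>
          (((3 : ℝ)⁻¹) •
            ((Matrix.adjugate
                (Matrix.of fun b j => fderiv ℝ u y (Pi.single j 1) b)).mulVec
                (u y) - y)) (2 : Fin 3))
      = (fun y =>
        (3:ℝ)⁻¹ *
          ((fderiv ℝ u y (Pi.single 0 1) 1 * fderiv ℝ u y (Pi.single 1 1) 2 -
                    fderiv ℝ u y (Pi.single 1 1) 1 * fderiv ℝ u y (Pi.single 0 1) 2) *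
                  u y 0 +
                (-(fderiv ℝ u y (Pi.single 0 1) 0 * fderiv ℝ u y (Pi.single 1 1) 2) +
                    fderiv ℝ u y (Pi.single 1 1) 0 * fderiv ℝ u y (Pi.single 0 1) 2) *
                  u y 1 +
              (fderiv ℝ u y (Pi.single 0 1) 0 * fderiv ℝ u y (Pi.single 1 1) 1 -
                  fderiv ℝ u y (Pi.single 1 1) 0 * fderiv ℝ u y (Pi.single 0 1) 1) *
                u y 2 -
            y 2)) := by
    funext y
    simp [Matrix.adjugate_fin_three, Matrix.mulVec, dotProduct, Fin.sum_univ_three,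
      Pi.smul_apply, Pi.sub_apply, Matrix.vecHead, Matrix.vecTail]
  rw [Fin.sum_univ_three]
  erw [hfun0, hfun1, hfun2, comb0.fderiv, comb1.fderiv, comb2.fderiv]
  simp only [ContinuousLinearMap.add_apply, ContinuousLinearMap.sub_apply,
    ContinuousLinearMap.smul_apply, ContinuousLinearMap.neg_apply,
    ContinuousLinearMap.comp_apply, prj_apply, apv_apply, smul_eq_mul,
    Matrix.det_fin_three, Matrix.of_apply, Pi.single_eq_same,
    Pi.mul_apply, Pi.sub_apply, Pi.add_apply, Pi.neg_apply]
  rw [show fderiv ℝ (fderiv ℝ u) x (Pi.single 1 1) (Pi.single 0 1)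
        = fderiv ℝ (fderiv ℝ u) x (Pi.single 0 1) (Pi.single 1 1) from hsymm _ _,
      show fderiv ℝ (fderiv ℝ u) x (Pi.single 2 1) (Pi.single 0 1)
        = fderiv ℝ (fderiv ℝ u) x (Pi.single 0 1) (Pi.single 2 1) from hsymm _ _,
      show fderiv ℝ (fderiv ℝ u) x (Pi.single 2 1) (Pi.single 1 1)
        = fderiv ℝ (fderiv ℝ u) x (Pi.single 1 1) (Pi.single 2 1) from hsymm _ _]
  ring
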